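/- Let d ≥ 1, let X be a random vector distributed according to the standard d-variate normal distribution N_d(0, I_d), and let s, t ∈ ℝ^d. Then the matrix expectation E[ (sᵀX) · X Xᵀ · CS⁺(t,X) ] = ( sᵀt (I_d − t tᵀ) + s tᵀ + t sᵀ ) ψ(t). -/

import Mathlib

open MeasureTheory Real
open scoped NNReal ENNReal

/-- The standard `d`-variate normal distribution `N_d(0, I_d)`, given by its Lebesgue
density `(2π)^{-d/2} exp(-‖x‖²/2)`. -/
noncomputable def stdGaussian (d : ℕ) : Measure (EuclideanSpace ℝ (Fin d)) :=
  volume.withDensity fun x => ENNReal.ofReal ((2 * π) ^ (-(d : ℝ) / 2) * Real.exp (-‖x‖ ^ 2 / 2))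

/-- The characteristic function of the standard `d`-variate normal distribution. -/
noncomputable def stdNormalCF {d : ℕ} (t : EuclideanSpace ℝ (Fin d)) : ℝ :=
  Real.exp (-‖t‖ ^ 2 / 2)

/-- `CS⁺(t,x) = cos(tᵀx) + sin(tᵀx)`. -/
noncomputable def CSplus {d : ℕ} (t x : EuclideanSpace ℝ (Fin d)) : ℝ :=
  Real.cos (inner ℝ t x : ℝ) + Real.sin (inner ℝ t x : ℝ)

/-! ### Auxiliary 1D Gaussian moment integrals -/

noncomputable def Jm (m : ℕ) (a : ℝ) : ℂ :=
  ∫ y : ℝ, (y:ℂ)^m * Complex.exp (a * y * Complex.I) * (Real.exp (-y^2/2) : ℝ)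

noncomputable def Cg : ℂ := ((2*π:ℝ):ℂ) ^ (1/2 : ℂ)

noncomputable def Qp : ℕ → ℝ → ℂ
  | 0, _ => 1
  | 1, a => Complex.I * a
  | 2, a => 1 - (a:ℂ)^2
  | 3, a => Complex.I * (3*(a:ℂ) - (a:ℂ)^3)
  | _+4, _ => 0

lemma integrable_pow_gauss (m : ℕ) :
    Integrable fun y : ℝ => y ^ m * Real.exp (-y^2/2) := by
  have h := integrable_rpow_mul_exp_neg_mul_sq (b := 1/2) (by norm_num) (s := (m:ℝ))
    ((by norm_num : (-1:ℝ) < 0).trans_le (Nat.cast_nonneg m))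
  have e : (fun y:ℝ => y ^ (m:ℝ) * Real.exp (-(1/2) * y^2))
      = fun y => y^m * Real.exp (-y^2/2) := by
    funext y; rw [Real.rpow_natCast]; ring_nf
  rwa [e] at h

lemma integrable_abs_pow_gauss (m : ℕ) :
    Integrable fun y : ℝ => |y| ^ m * Real.exp (-y^2/2) := by
  have := (integrable_pow_gauss m).abs
  simpa [abs_mul, abs_pow, _root_.abs_of_nonneg (Real.exp_pos _).le] using this

lemma norm_Jm_integrand (m : ℕ) (a y : ℝ) :
    ‖(y:ℂ)^m * Complex.exp (a * y * Complex.I) * ((Real.exp (-y^2/2) : ℝ):ℂ)‖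
      = |y| ^ m * Real.exp (-y^2/2) := by
  rw [norm_mul, norm_mul, norm_pow, Complex.norm_real, Complex.norm_exp, Complex.norm_real,
    Real.norm_eq_abs, Real.norm_eq_abs]
  have : (↑a * ↑y * Complex.I).re = 0 := by simp
  rw [this, Real.exp_zero, mul_one, _root_.abs_of_nonneg (Real.exp_pos _).le]

lemma Jm_integrand_integrable (m : ℕ) (a : ℝ) :
    Integrable fun y : ℝ => (y:ℂ)^m * Complex.exp (a * y * Complex.I) * ((Real.exp (-y^2/2):ℝ):ℂ) := by
  apply Integrable.mono' (integrable_abs_pow_gauss m)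
  · apply Continuous.aestronglyMeasurable
    continuity
  · exact Filter.Eventually.of_forall fun y => (norm_Jm_integrand m a y).le

lemma hasDerivAt_cexp_lin (c : ℂ) (x : ℝ) :
    HasDerivAt (fun x : ℝ => Complex.exp (x * c)) (c * Complex.exp (x * c)) x := by
  have h : HasDerivAt (fun z : ℂ => Complex.exp (z * c)) (c * Complex.exp ((x:ℂ) * c)) x := by
    simpa [mul_comm] using ((hasDerivAt_id (x:ℂ)).mul_const c).cexp
  exact h.comp_ofReal

lemma hasDerivAt_Jm (m : ℕ) (a : ℝ) :
    HasDerivAt (Jm m) (Complex.I * Jm (m+1) a) a := by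
  have hmeas : ∀ᶠ (x:ℝ) in nhds a, AEStronglyMeasurable
      (fun (y : ℝ) => (y:ℂ)^m * Complex.exp (x * y * Complex.I) * ((Real.exp (-y^2/2):ℝ):ℂ)) volume :=
    Filter.Eventually.of_forall fun x => (Jm_integrand_integrable m x).aestronglyMeasurable
  have hint : Integrable (fun (y : ℝ) => (y:ℂ)^m * Complex.exp (a * y * Complex.I) * ((Real.exp (-y^2/2):ℝ):ℂ)) volume :=
    Jm_integrand_integrable m a
  have hmeas' : AEStronglyMeasurable
      (fun (y : ℝ) => ((y:ℂ) * Complex.I) * ((y:ℂ)^m * Complex.exp (a * y * Complex.I) * ((Real.exp (-y^2/2):ℝ):ℂ))) volume := by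
    apply Continuous.aestronglyMeasurable; continuity
  have hbound : ∀ᵐ (y:ℝ) ∂volume, ∀ x ∈ Metric.ball a 1,
      ‖((y:ℂ) * Complex.I) * ((y:ℂ)^m * Complex.exp (x * y * Complex.I) * ((Real.exp (-y^2/2):ℝ):ℂ))‖
        ≤ |y| ^ (m+1) * Real.exp (-y^2/2) := by
    refine Filter.Eventually.of_forall fun y x _ => ?_
    rw [norm_mul, norm_Jm_integrand, norm_mul, Complex.norm_real, Complex.norm_I,
      mul_one, Real.norm_eq_abs, pow_succ]
    ring_nf
    exact le_refl _
  have hbi : Integrable (fun y : ℝ => |y| ^ (m+1) * Real.exp (-y^2/2)) volume :=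
    integrable_abs_pow_gauss (m+1)
  have hdiff : ∀ᵐ (y:ℝ) ∂volume, ∀ x ∈ Metric.ball a 1,
      HasDerivAt (fun (x:ℝ) => (y:ℂ)^m * Complex.exp (x * y * Complex.I) * ((Real.exp (-y^2/2):ℝ):ℂ))
        (((y:ℂ) * Complex.I) * ((y:ℂ)^m * Complex.exp (x * y * Complex.I) * ((Real.exp (-y^2/2):ℝ):ℂ))) x := by
    refine Filter.Eventually.of_forall fun y x _ => ?_
    have h := hasDerivAt_cexp_lin ((y:ℂ) * Complex.I) x
    have h2 := (h.const_mul ((y:ℂ)^m)).mul_const ((Real.exp (-y^2/2):ℝ):ℂ)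
    have e1 : (fun (x:ℝ) => (y:ℂ)^m * Complex.exp (x * y * Complex.I) * ((Real.exp (-y^2/2):ℝ):ℂ))
        = fun (x:ℝ) => (y:ℂ)^m * Complex.exp ((x:ℂ) * ((y:ℂ) * Complex.I)) * ((Real.exp (-y^2/2):ℝ):ℂ) := by
      funext u; ring_nf
    have e2 : ((y:ℂ) * Complex.I) * ((y:ℂ)^m * Complex.exp (x * y * Complex.I) * ((Real.exp (-y^2/2):ℝ):ℂ))
        = (y:ℂ)^m * (((y:ℂ) * Complex.I) * Complex.exp ((x:ℂ) * ((y:ℂ) * Complex.I))) * ((Real.exp (-y^2/2):ℝ):ℂ) := by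
      ring_nf
    rw [e1, e2]
    exact h2
  have key := hasDerivAt_integral_of_dominated_loc_of_deriv_le (Metric.ball_mem_nhds a one_pos) hmeas hint hmeas' hbound hbi hdiff
  have h2 := key.2
  have heq : (∫ y : ℝ, ((y:ℂ) * Complex.I) * ((y:ℂ)^m * Complex.exp (a * y * Complex.I) * ((Real.exp (-y^2/2):ℝ):ℂ)))
      = Complex.I * Jm (m+1) a := by
    rw [Jm, ← integral_const_mul]
    congr 1; funext y; ring
  rwa [heq] at h2

lemma Jm_zero (a : ℝ) : Jm 0 a = Cg * Complex.exp (-(a:ℂ)^2/2) := by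
  have hb : ((-1/2 : ℂ)).re < 0 := by norm_num
  have h := integral_cexp_quadratic hb ((a:ℂ) * Complex.I) 0
  have e : ∀ y : ℝ, ((y:ℂ))^(0:ℕ) * Complex.exp (a * y * Complex.I) * ((Real.exp (-y^2/2):ℝ):ℂ)
      = Complex.exp ((-1/2 : ℂ) * y^2 + ((a:ℂ) * Complex.I) * y + 0) := by
    intro y
    rw [pow_zero, one_mul, Complex.ofReal_exp, ← Complex.exp_add]
    congr 1
    push_cast
    ring
  rw [Jm]
  simp_rw [e]
  rw [h]
  congr 1
  · rw [Cg]
    congr 1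
    push_cast
    ring
  · congr 1
    have : ((a:ℂ) * Complex.I)^2 = -(a:ℂ)^2 := by
      rw [mul_pow, Complex.I_sq]; ring
    rw [this]
    ring

lemma eq_neg_I_mul {X Y : ℂ} (h : Complex.I * X = Y) : X = -Complex.I * Y := by
  rw [← h]
  rw [neg_mul, ← mul_assoc, Complex.I_mul_I]
  ring

lemma hasDerivAt_gaussC (a : ℝ) :
    HasDerivAt (fun a:ℝ => Complex.exp (-((a:ℂ))^2/2)) (-(a:ℂ) * Complex.exp (-(a:ℂ)^2/2)) a := by
  have h1 : HasDerivAt (fun z:ℂ => -z^2/2) (-(a:ℂ)) (a:ℂ) := by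
    have := ((hasDerivAt_pow 2 ((a:ℝ):ℂ)).neg).div_const 2
    exact this.congr_deriv (by norm_num; ring)
  have h2 := h1.cexp
  have h3 := h2.comp_ofReal
  simpa [mul_comm] using h3

lemma hasDerivAt_ofReal' (a : ℝ) : HasDerivAt (fun x:ℝ => (x:ℂ)) 1 a :=
  (hasDerivAt_id ((a:ℝ):ℂ)).comp_ofReal

lemma Jm_one (a : ℝ) : Jm 1 a = Cg * (Complex.I * a) * Complex.exp (-(a:ℂ)^2/2) := by
  have hJ0 : Jm 0 = fun a : ℝ => Cg * Complex.exp (-(a:ℂ)^2/2) := funext Jm_zero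
  have hd := hasDerivAt_Jm 0 a
  rw [hJ0] at hd
  have hg : HasDerivAt (fun a:ℝ => Cg * Complex.exp (-((a:ℂ))^2/2))
      (Cg * (-(a:ℂ) * Complex.exp (-(a:ℂ)^2/2))) a := (hasDerivAt_gaussC a).const_mul Cg
  have h := eq_neg_I_mul (hd.unique hg)
  rw [h]; ring

lemma Jm_two (a : ℝ) : Jm 2 a = Cg * (1 - (a:ℂ)^2) * Complex.exp (-(a:ℂ)^2/2) := by
  have hJ1 : Jm 1 = fun a : ℝ => Cg * (Complex.I * a) * Complex.exp (-(a:ℂ)^2/2) := funext Jm_one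
  have hd := hasDerivAt_Jm 1 a
  rw [hJ1] at hd
  have hq : HasDerivAt (fun a:ℝ => Cg * (Complex.I * (a:ℂ))) (Cg * (Complex.I * 1)) a :=
    ((hasDerivAt_ofReal' a).const_mul Complex.I).const_mul Cg
  have hg := hq.mul (hasDerivAt_gaussC a)
  have h := eq_neg_I_mul (hd.unique hg)
  rw [h]
  linear_combination (-Cg * (1 - (a:ℂ)^2) * Complex.exp (-(a:ℂ)^2/2)) * Complex.I_mul_I

lemma Jm_three (a : ℝ) :
    Jm 3 a = Cg * (Complex.I * (3*(a:ℂ) - (a:ℂ)^3)) * Complex.exp (-(a:ℂ)^2/2) := by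
  have hJ2 : Jm 2 = fun a : ℝ => Cg * (1 - (a:ℂ)^2) * Complex.exp (-(a:ℂ)^2/2) := funext Jm_two
  have hd := hasDerivAt_Jm 2 a
  rw [hJ2] at hd
  have hsq : HasDerivAt (fun a:ℝ => ((a:ℂ))^2) (2*(a:ℂ)) a := by
    have := (hasDerivAt_pow 2 ((a:ℝ):ℂ)).comp_ofReal
    simpa using this
  have hq : HasDerivAt (fun a:ℝ => Cg * (1 - ((a:ℂ))^2)) (Cg * (-(2*(a:ℂ)))) a :=
    (hsq.const_sub 1).const_mul Cg
  have hg := hq.mul (hasDerivAt_gaussC a)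
  have h := eq_neg_I_mul (hd.unique hg)
  rw [h]
  ring

noncomputable def Km (m : ℕ) (a : ℝ) : ℂ :=
  ∫ y : ℝ, (y:ℂ)^m * Complex.exp (a * y * Complex.I)
    * (((2*π) ^ (-(1:ℝ)/2) * Real.exp (-y^2/2) : ℝ) : ℂ)

lemma Km_eq_Jm (m : ℕ) (a : ℝ) :
    Km m a = (((2*π) ^ (-(1:ℝ)/2) : ℝ) : ℂ) * Jm m a := by
  rw [Km, Jm, ← integral_const_mul]
  congr 1; funext y
  push_cast
  ring

lemma cg_cancel : (((2*π) ^ (-(1:ℝ)/2) : ℝ) : ℂ) * Cg = 1 := by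
  rw [Cg, Complex.ofReal_cpow (by positivity : (0:ℝ) ≤ 2*π)]
  rw [← Complex.cpow_add _ _ (Complex.ofReal_ne_zero.mpr (by positivity))]
  norm_num

lemma Km_eq (m : ℕ) (hm : m ≤ 3) (a : ℝ) :
    Km m a = Qp m a * Complex.exp (-(a:ℂ)^2/2) := by
  interval_cases m
  · rw [Km_eq_Jm, Jm_zero, ← mul_assoc, cg_cancel]; simp [Qp]
  · rw [Km_eq_Jm, Jm_one, Qp, ← mul_assoc, ← mul_assoc, cg_cancel]; ring
  · rw [Km_eq_Jm, Jm_two, Qp, ← mul_assoc, ← mul_assoc, cg_cancel]; ring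
  · rw [Km_eq_Jm, Jm_three, Qp, ← mul_assoc, ← mul_assoc, cg_cancel]; ring

lemma Km_integrand_integrable (m : ℕ) (a : ℝ) :
    Integrable fun y : ℝ => (y:ℂ)^m * Complex.exp (a * y * Complex.I)
      * (((2*π) ^ (-(1:ℝ)/2) * Real.exp (-y^2/2) : ℝ) : ℂ) := by
  have h := (Jm_integrand_integrable m a).const_mul ((((2*π) ^ (-(1:ℝ)/2) : ℝ)):ℂ)
  apply h.congr
  refine Filter.Eventually.of_forall fun y => ?_
  push_cast
  ring

/-! ### Multivariate reduction -/

def ec {d : ℕ} (i k l j : Fin d) : ℕ :=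
  (if i = j then 1 else 0) + (if k = j then 1 else 0) + (if l = j then 1 else 0)

section Multivariate

variable {d : ℕ}

lemma ec_le_three (i k l j : Fin d) : ec i k l j ≤ 3 := by
  unfold ec; split_ifs <;> norm_num

lemma density_factor (x : Fin d → ℝ) :
    (2 * π) ^ (-(d : ℝ) / 2) * Real.exp (-(∑ j, (x j)^2) / 2)
      = ∏ j, ((2*π) ^ (-(1:ℝ)/2) * Real.exp (-(x j)^2/2)) := by
  rw [Finset.prod_mul_distrib, Finset.prod_const]
  rw [← Real.exp_sum]
  have h1 : (2 * π) ^ (-(d : ℝ) / 2) = ((2*π) ^ (-(1:ℝ)/2)) ^ (Finset.univ.card (α := Fin d)) := by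
    rw [← Real.rpow_natCast ((2*π) ^ (-(1:ℝ)/2)) (Finset.univ.card), ← Real.rpow_mul (by positivity)]
    congr 1
    simp
    ring
  have h2 : -(∑ j, (x j)^2) / 2 = ∑ j, (-(x j)^2/2) := by
    rw [← Finset.sum_div, ← Finset.sum_neg_distrib]
  rw [h1, h2]

lemma prod_pow_ite (i : Fin d) (x : Fin d → ℝ) :
    (∏ j, (x j : ℂ) ^ (if i = j then 1 else 0)) = (x i : ℂ) := by
  have : ∀ j ∈ Finset.univ, (x j : ℂ) ^ (if i = j then 1 else 0)
      = if i = j then (x j : ℂ) else 1 := by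
    intro j _; split_ifs <;> simp
  rw [Finset.prod_congr rfl this, Finset.prod_ite_eq]
  simp

lemma integrand_factor (t : EuclideanSpace ℝ (Fin d)) (i k l : Fin d) (x : Fin d → ℝ) :
    (((2 * π) ^ (-(d : ℝ) / 2) * Real.exp (-(∑ j, (x j)^2) / 2) : ℝ) : ℂ)
        * (((x i : ℂ) * x k * x l) * Complex.exp ((∑ j, t j * x j : ℝ) * Complex.I))
      = ∏ j, ((x j : ℂ)^(ec i k l j) * Complex.exp (t j * x j * Complex.I)
          * (((2*π) ^ (-(1:ℝ)/2) * Real.exp (-(x j)^2/2) : ℝ) : ℂ)) := by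
  rw [Finset.prod_mul_distrib, Finset.prod_mul_distrib]
  have hpow : (∏ j, (x j : ℂ)^(ec i k l j)) = (x i : ℂ) * x k * x l := by
    simp_rw [ec, pow_add]
    rw [Finset.prod_mul_distrib, Finset.prod_mul_distrib,
      prod_pow_ite, prod_pow_ite, prod_pow_ite]
  have hexp : (∏ j, Complex.exp (t j * x j * Complex.I))
      = Complex.exp ((∑ j, t j * x j : ℝ) * Complex.I) := by
    rw [← Complex.exp_sum]
    congr 1
    push_cast
    rw [Finset.sum_mul]
  have hdens : (∏ j, (((2*π) ^ (-(1:ℝ)/2) * Real.exp (-(x j)^2/2) : ℝ) : ℂ))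
      = (((2 * π) ^ (-(d : ℝ) / 2) * Real.exp (-(∑ j, (x j)^2) / 2) : ℝ) : ℂ) := by
    rw [← Complex.ofReal_prod, ← density_factor]
  rw [hpow, hexp, hdens]
  ring

lemma norm_sq_eq_sum (x : EuclideanSpace ℝ (Fin d)) : ‖x‖^2 = ∑ j, (x j)^2 := by
  rw [EuclideanSpace.norm_eq, Real.sq_sqrt (Finset.sum_nonneg fun j _ => sq_nonneg _)]
  simp [Real.norm_eq_abs, sq_abs]

lemma inner_eq_sum (t x : EuclideanSpace ℝ (Fin d)) : (inner ℝ t x : ℝ) = ∑ j, t j * x j := by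
  simp [PiLp.inner_apply, RCLike.inner_apply, mul_comm]

lemma smul_eq_prod (t : EuclideanSpace ℝ (Fin d)) (i k l : Fin d) :
    ∀ x : EuclideanSpace ℝ (Fin d),
      Real.toNNReal ((2 * π) ^ (-(d : ℝ) / 2) * Real.exp (-‖x‖ ^ 2 / 2)) • (((x i : ℂ) * x k * x l)
        * Complex.exp (((inner ℝ t x : ℝ)) * Complex.I))
      = ∏ j, ((x j : ℂ)^(ec i k l j) * Complex.exp (t j * x j * Complex.I)
          * (((2*π) ^ (-(1:ℝ)/2) * Real.exp (-(x j)^2/2) : ℝ) : ℂ)) := by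
  intro x
  rw [NNReal.smul_def, Real.coe_toNNReal _ (by positivity), Complex.real_smul]
  rw [← integrand_factor t i k l x]
  have e1 : (2 * π) ^ (-(d : ℝ) / 2) * Real.exp (-‖x‖ ^ 2 / 2)
      = (2 * π) ^ (-(d : ℝ) / 2) * Real.exp (-(∑ j, (x j)^2) / 2) := by
    rw [norm_sq_eq_sum]
  rw [e1, inner_eq_sum]

lemma density_measurable (d : ℕ) :
    Measurable fun x : EuclideanSpace ℝ (Fin d) =>
      Real.toNNReal ((2 * π) ^ (-(d : ℝ) / 2) * Real.exp (-‖x‖ ^ 2 / 2)) := by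
  apply Measurable.real_toNNReal
  apply Continuous.measurable
  apply Continuous.mul continuous_const
  exact Real.continuous_exp.comp (by continuity)

lemma Cint (t : EuclideanSpace ℝ (Fin d)) (i k l : Fin d) :
    ∫ x, ((x i : ℂ) * x k * x l) * Complex.exp (((inner ℝ t x : ℝ)) * Complex.I) ∂(stdGaussian d)
      = (∏ j, Qp (ec i k l j) (t j)) * ((Real.exp (-‖t‖^2/2) : ℝ) : ℂ) := by
  rw [stdGaussian]
  rw [show (fun x : EuclideanSpace ℝ (Fin d) =>
      ENNReal.ofReal ((2 * π) ^ (-(d:ℝ) / 2) * Real.exp (-‖x‖ ^ 2 / 2)))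
    = fun x => ((Real.toNNReal ((2 * π) ^ (-(d:ℝ) / 2) * Real.exp (-‖x‖ ^ 2 / 2)) : ℝ≥0) : ℝ≥0∞) from rfl]
  rw [integral_withDensity_eq_integral_smul (density_measurable d)
    (fun x => ((x i : ℂ) * x k * x l) * Complex.exp (((inner ℝ t x : ℝ)) * Complex.I))]
  rw [integral_congr_ae (Filter.Eventually.of_forall (smul_eq_prod t i k l))]
  have mp := (EuclideanSpace.volume_preserving_symm_measurableEquiv_toLp (Fin d)).symm
  rw [← mp.integral_comp' (fun x : EuclideanSpace ℝ (Fin d) =>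
    ∏ j, ((x j : ℂ)^(ec i k l j) * Complex.exp (t j * x j * Complex.I)
      * (((2*π) ^ (-(1:ℝ)/2) * Real.exp (-(x j)^2/2) : ℝ) : ℂ)))]
  rw [show (fun x : Fin d → ℝ => (fun y : EuclideanSpace ℝ (Fin d) =>
      ∏ j, ((y j : ℂ)^(ec i k l j) * Complex.exp (t j * y j * Complex.I)
        * (((2*π) ^ (-(1:ℝ)/2) * Real.exp (-(y j)^2/2) : ℝ) : ℂ)))
        ((MeasurableEquiv.toLp 2 (Fin d → ℝ)).symm.symm x))
    = fun x : Fin d → ℝ => ∏ j, ((x j : ℂ)^(ec i k l j) * Complex.exp (t j * x j * Complex.I)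
        * (((2*π) ^ (-(1:ℝ)/2) * Real.exp (-(x j)^2/2) : ℝ) : ℂ)) from rfl]
  rw [MeasureTheory.integral_fintype_prod_volume_eq_prod
    (f := fun j (y : ℝ) => (y : ℂ)^(ec i k l j) * Complex.exp (t j * y * Complex.I)
      * (((2*π) ^ (-(1:ℝ)/2) * Real.exp (-y^2/2) : ℝ) : ℂ))]
  have hKm : ∀ j, (∫ y : ℝ, (y : ℂ)^(ec i k l j) * Complex.exp (t j * y * Complex.I)
      * (((2*π) ^ (-(1:ℝ)/2) * Real.exp (-y^2/2) : ℝ) : ℂ))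
      = Qp (ec i k l j) (t j) * Complex.exp (-((t j : ℝ):ℂ)^2/2) := by
    intro j
    rw [← Km]
    exact Km_eq _ (ec_le_three i k l j) _
  rw [Finset.prod_congr rfl (fun j _ => hKm j), Finset.prod_mul_distrib]
  congr 1
  rw [← Complex.exp_sum]
  rw [show (∑ j, -((t j : ℝ):ℂ)^2/2) = ((-‖t‖^2/2 : ℝ) : ℂ) by
    push_cast [norm_sq_eq_sum]
    rw [← Finset.sum_div, ← Finset.sum_neg_distrib]]
  rw [Complex.ofReal_exp]

lemma Cint_integrable (t : EuclideanSpace ℝ (Fin d)) (i k l : Fin d) :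
    Integrable (fun x => ((x i : ℂ) * x k * x l)
      * Complex.exp (((inner ℝ t x : ℝ)) * Complex.I)) (stdGaussian d) := by
  rw [stdGaussian]
  rw [show (fun x : EuclideanSpace ℝ (Fin d) =>
      ENNReal.ofReal ((2 * π) ^ (-(d:ℝ) / 2) * Real.exp (-‖x‖ ^ 2 / 2)))
    = fun x => ((Real.toNNReal ((2 * π) ^ (-(d:ℝ) / 2) * Real.exp (-‖x‖ ^ 2 / 2)) : ℝ≥0) : ℝ≥0∞) from rfl]
  rw [integrable_withDensity_iff_integrable_smul (density_measurable d)]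
  have he : (fun x : EuclideanSpace ℝ (Fin d) =>
      Real.toNNReal ((2 * π) ^ (-(d:ℝ) / 2) * Real.exp (-‖x‖ ^ 2 / 2)) • (((x i : ℂ) * x k * x l)
        * Complex.exp (((inner ℝ t x : ℝ)) * Complex.I)))
      = fun x => ∏ j, ((x j : ℂ)^(ec i k l j) * Complex.exp (t j * x j * Complex.I)
          * (((2*π) ^ (-(1:ℝ)/2) * Real.exp (-(x j)^2/2) : ℝ) : ℂ)) := funext (smul_eq_prod t i k l)
  rw [he]
  have mp := (EuclideanSpace.volume_preserving_symm_measurableEquiv_toLp (Fin d)).symm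
  have hpi : Integrable (fun x : Fin d → ℝ =>
      ∏ j, ((x j : ℂ)^(ec i k l j) * Complex.exp (t j * x j * Complex.I)
        * (((2*π) ^ (-(1:ℝ)/2) * Real.exp (-(x j)^2/2) : ℝ) : ℂ))) volume :=
    Integrable.fintype_prod (f := fun j (y:ℝ) => (y : ℂ)^(ec i k l j)
      * Complex.exp (t j * y * Complex.I)
      * (((2*π) ^ (-(1:ℝ)/2) * Real.exp (-y^2/2) : ℝ) : ℂ))
      (fun j => Km_integrand_integrable _ _)
  exact (mp.integrable_comp_emb (g := fun x : EuclideanSpace ℝ (Fin d) =>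
      ∏ j, ((x j : ℂ)^(ec i k l j) * Complex.exp (t j * x j * Complex.I)
        * (((2*π) ^ (-(1:ℝ)/2) * Real.exp (-(x j)^2/2) : ℝ) : ℂ)))
    (MeasurableEquiv.toLp 2 (Fin d → ℝ)).symm.symm.measurableEmbedding).mp hpi

lemma prod_univ_eq_prod_subset {f : Fin d → ℂ} (s : Finset (Fin d))
    (h1 : ∀ j, j ∉ s → f j = 1) : (∏ j, f j) = ∏ j ∈ s, f j :=
  (Finset.prod_subset (Finset.subset_univ s) (fun x _ hx => h1 x hx)).symm

lemma prod_Qp (t : EuclideanSpace ℝ (Fin d)) (i k l : Fin d) :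
    (∏ j, Qp (ec i k l j) (t j))
      = Complex.I * ((if i = k then (t l : ℂ) else 0) + (if i = l then (t k : ℂ) else 0)
          + (if k = l then (t i : ℂ) else 0) - t i * t k * t l) := by
  have hone : ∀ j, ec i k l j = 0 → Qp (ec i k l j) (t j) = 1 := by
    intro j h; rw [h]; rfl
  by_cases hik : i = k
  · by_cases hil : i = l
    · -- all three equal
      subst hik; subst hil
      rw [prod_univ_eq_prod_subset {i} (fun j hj => by
        have : i ≠ j := by simpa [eq_comm] using hj
        exact hone j (by simp [ec, this]))]
      rw [Finset.prod_singleton]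
      have : ec i i i i = 3 := by simp [ec]
      rw [this]
      simp only [Qp, if_pos rfl]
      push_cast; ring
    · -- i = k ≠ l
      subst hik
      have hli : l ≠ i := fun h => hil h.symm
      rw [prod_univ_eq_prod_subset {i, l} (fun j hj => by
        simp only [Finset.mem_insert, Finset.mem_singleton, not_or] at hj
        exact hone j (by simp [ec, Ne.symm hj.1, Ne.symm hj.2]))]
      rw [Finset.prod_insert (by simpa using hil), Finset.prod_singleton]
      have e1 : ec i i l i = 2 := by simp [ec, hli]
      have e2 : ec i i l l = 1 := by simp [ec, hil]
      rw [e1, e2]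
      simp only [Qp, if_pos rfl, if_neg hil, if_neg hil]
      push_cast; ring
  · by_cases hil : i = l
    · -- i = l ≠ k
      subst hil
      have hki : k ≠ i := fun h => hik h.symm
      rw [prod_univ_eq_prod_subset {i, k} (fun j hj => by
        simp only [Finset.mem_insert, Finset.mem_singleton, not_or] at hj
        exact hone j (by simp [ec, Ne.symm hj.1, Ne.symm hj.2]))]
      rw [Finset.prod_insert (by simpa using hik), Finset.prod_singleton]
      have e1 : ec i k i i = 2 := by simp [ec, hki]
      have e2 : ec i k i k = 1 := by simp [ec, hik]
      rw [e1, e2]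
      simp only [Qp, if_pos rfl, if_neg hik, if_neg hki]
      push_cast; ring
    · by_cases hkl : k = l
      · -- k = l ≠ i
        subst hkl
        have hki : k ≠ i := fun h => hik h.symm
        rw [prod_univ_eq_prod_subset {i, k} (fun j hj => by
          simp only [Finset.mem_insert, Finset.mem_singleton, not_or] at hj
          exact hone j (by simp [ec, Ne.symm hj.1, Ne.symm hj.2]))]
        rw [Finset.prod_insert (by simpa using hik), Finset.prod_singleton]
        have e1 : ec i k k i = 1 := by simp [ec, hki]
        have e2 : ec i k k k = 2 := by simp [ec, hik]
        rw [e1, e2]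
        simp only [Qp, if_pos rfl, if_neg hik, if_neg hik]
        push_cast; ring
      · -- all distinct
        have hki : k ≠ i := fun h => hik h.symm
        have hli : l ≠ i := fun h => hil h.symm
        have hlk : l ≠ k := fun h => hkl h.symm
        rw [prod_univ_eq_prod_subset {i, k, l} (fun j hj => by
          simp only [Finset.mem_insert, Finset.mem_singleton, not_or] at hj
          exact hone j (by
            simp [ec, Ne.symm hj.1, Ne.symm hj.2.1, Ne.symm hj.2.2]))]
        rw [Finset.prod_insert (by simp [hik, hil]), Finset.prod_insert (by simpa using hkl),
          Finset.prod_singleton]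
        have e1 : ec i k l i = 1 := by simp [ec, hki, hli]
        have e2 : ec i k l k = 1 := by simp [ec, hik, hlk]
        have e3 : ec i k l l = 1 := by simp [ec, hil, hkl]
        rw [e1, e2, e3]
        simp only [Qp, if_neg hik, if_neg hil, if_neg hkl]
        push_cast
        linear_combination (Complex.I * ((t i : ℂ) * t k * t l)) * Complex.I_mul_I


lemma real_int (t : EuclideanSpace ℝ (Fin d)) (i k l : Fin d) :
    ∫ x, (x i * x k * x l) * CSplus t x ∂(stdGaussian d)
      = ((if i = k then t l else 0) + (if i = l then t k else 0) + (if k = l then t i else 0)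
          - t i * t k * t l) * stdNormalCF t := by
  set f := fun x : EuclideanSpace ℝ (Fin d) =>
    ((x i : ℂ) * x k * x l) * Complex.exp (((inner ℝ t x : ℝ)) * Complex.I) with hf
  have hre : ∀ x, (x i * x k * x l) * CSplus t x = ((1 - Complex.I) * f x).re := by
    intro x
    simp only [hf]
    rw [CSplus]
    set θ := (inner ℝ t x : ℝ)
    set p : ℝ := x i * x k * x l with hp
    have hcast : ((x i : ℝ) : ℂ) * x k * x l = (p : ℂ) := by rw [hp]; norm_cast
    rw [hcast]
    have key : (1 - Complex.I) * ((p:ℂ) * Complex.exp ((θ:ℂ) * Complex.I))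
        = ((p * (Real.cos θ + Real.sin θ) : ℝ) : ℂ)
          + ((p * (Real.sin θ - Real.cos θ) : ℝ) : ℂ) * Complex.I := by
      rw [Complex.exp_mul_I, ← Complex.ofReal_cos, ← Complex.ofReal_sin]
      push_cast
      linear_combination (-(p:ℂ) * Complex.sin (θ:ℂ)) * Complex.I_mul_I
    rw [key]
    simp only [Complex.add_re, Complex.mul_re, Complex.I_re, Complex.I_im,
      Complex.ofReal_re, Complex.ofReal_im]
    ring
  rw [integral_congr_ae (Filter.Eventually.of_forall hre)]
  have hint : Integrable f (stdGaussian d) := Cint_integrable t i k l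
  have h1 : Integrable (fun x => (1 - Complex.I) * f x) (stdGaussian d) := hint.const_mul _
  have h2 : (∫ x, ((1 - Complex.I) * f x).re ∂(stdGaussian d))
      = (∫ x, (1 - Complex.I) * f x ∂(stdGaussian d)).re := by
    have := integral_re (μ := stdGaussian d) (f := fun x => (1 - Complex.I) * f x) h1
    simpa using this
  rw [h2, integral_const_mul, hf, Cint, prod_Qp]
  have hC : ((if i = k then (t l : ℂ) else 0) + (if i = l then (t k : ℂ) else 0)
        + (if k = l then (t i : ℂ) else 0) - (t i : ℂ) * t k * t l)
      = (((if i = k then t l else 0) + (if i = l then t k else 0) + (if k = l then t i else 0)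
          - t i * t k * t l : ℝ) : ℂ) := by
    push_cast [apply_ite (fun r : ℝ => (r : ℂ))]
    ring
  rw [hC]
  set r : ℝ := (if i = k then t l else 0) + (if i = l then t k else 0)
      + (if k = l then t i else 0) - t i * t k * t l
  set ψ : ℝ := Real.exp (-‖t‖^2/2) with hψ
  have key2 : (1 - Complex.I) * (Complex.I * (r:ℂ) * (ψ:ℂ))
      = ((r * ψ : ℝ) : ℂ) + ((r * ψ : ℝ) : ℂ) * Complex.I := by
    push_cast
    linear_combination (-(r:ℂ) * (ψ:ℂ)) * Complex.I_mul_I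
  rw [key2]
  rw [stdNormalCF]
  simp
  exact Or.inl hψ

theorem stdGaussian_matrix_inner_CSplus_expectation' (d : ℕ)
    (s t : EuclideanSpace ℝ (Fin d)) (k l : Fin d) :
    ∫ x, (inner ℝ s x : ℝ) * (x k * x l) * CSplus t x ∂(stdGaussian d)
      = ((inner ℝ s t : ℝ) * ((if k = l then (1 : ℝ) else 0) - t k * t l)
          + s k * t l + t k * s l) * stdNormalCF t := by
  have hexp : ∀ x : EuclideanSpace ℝ (Fin d),
      (inner ℝ s x : ℝ) * (x k * x l) * CSplus t x
        = ∑ i, s i * ((x i * x k * x l) * CSplus t x) := by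
    intro x
    rw [inner_eq_sum, Finset.sum_mul, Finset.sum_mul]
    refine Finset.sum_congr rfl fun i _ => by ring
  rw [integral_congr_ae (Filter.Eventually.of_forall hexp)]
  have hint_i : ∀ i : Fin d,
      Integrable (fun x => (x i * x k * x l) * CSplus t x) (stdGaussian d) := by
    intro i
    have hint : Integrable (fun x : EuclideanSpace ℝ (Fin d) =>
        ((x i : ℂ) * x k * x l) * Complex.exp (((inner ℝ t x : ℝ)) * Complex.I)) (stdGaussian d) :=
      Cint_integrable t i k l
    have h1 := (hint.const_mul (1 - Complex.I)).re
    apply h1.congr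
    refine Filter.Eventually.of_forall fun x => ?_
    have hre : (x i * x k * x l) * CSplus t x
        = ((1 - Complex.I) * (((x i : ℂ) * x k * x l)
            * Complex.exp (((inner ℝ t x : ℝ)) * Complex.I))).re := by
      rw [CSplus]
      set θ := (inner ℝ t x : ℝ)
      set p : ℝ := x i * x k * x l with hp
      have hcast : ((x i : ℝ) : ℂ) * x k * x l = (p : ℂ) := by rw [hp]; norm_cast
      rw [hcast]
      have key : (1 - Complex.I) * ((p:ℂ) * Complex.exp ((θ:ℂ) * Complex.I))
          = ((p * (Real.cos θ + Real.sin θ) : ℝ) : ℂ)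
            + ((p * (Real.sin θ - Real.cos θ) : ℝ) : ℂ) * Complex.I := by
        rw [Complex.exp_mul_I, ← Complex.ofReal_cos, ← Complex.ofReal_sin]
        push_cast
        linear_combination (-(p:ℂ) * Complex.sin (θ:ℂ)) * Complex.I_mul_I
      rw [key]
      simp only [Complex.add_re, Complex.mul_re, Complex.I_re, Complex.I_im,
        Complex.ofReal_re, Complex.ofReal_im]
      ring
    simp only [RCLike.re_to_complex]
    exact hre.symm
  rw [integral_finset_sum _ (fun i _ => (hint_i i).const_mul (s i))]
  have hterm : ∀ i : Fin d, (∫ x, s i * ((x i * x k * x l) * CSplus t x) ∂(stdGaussian d))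
      = s i * (((if i = k then t l else 0) + (if i = l then t k else 0)
          + (if k = l then t i else 0) - t i * t k * t l) * stdNormalCF t) := by
    intro i
    rw [integral_const_mul, real_int]
  rw [Finset.sum_congr rfl (fun i _ => hterm i)]
  set ψ : ℝ := stdNormalCF t
  have hsplit : ∀ i ∈ Finset.univ, s i * (((if i = k then t l else 0) + (if i = l then t k else 0)
        + (if k = l then t i else 0) - t i * t k * t l) * ψ)
      = ((if i = k then s i * t l * ψ else 0) + (if i = l then s i * t k * ψ else 0)
        + (if k = l then s i * t i * ψ else 0)) - (s i * t i) * (t k * t l * ψ) := by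
    intro i _
    split_ifs <;> ring
  rw [Finset.sum_congr rfl hsplit, Finset.sum_sub_distrib, Finset.sum_add_distrib,
    Finset.sum_add_distrib, Finset.sum_ite_eq', Finset.sum_ite_eq', ← Finset.sum_mul]
  have hinner : (inner ℝ s t : ℝ) = ∑ i, s i * t i := inner_eq_sum s t
  by_cases hkl : k = l
  · simp only [if_pos hkl, Finset.mem_univ, if_true, hinner]
    rw [← Finset.sum_mul]
    ring
  · simp only [if_neg hkl, Finset.mem_univ, if_true, hinner, Finset.sum_const_zero]
    ring

end Multivariate


/-- For `X ~ N_d(0, I_d)`, entrywise: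
`E[(sᵀX) X Xᵀ CS⁺(t,X)] = (sᵀt (I_d - t tᵀ) + s tᵀ + t sᵀ) ψ(t)`. -/
theorem stdGaussian_matrix_inner_CSplus_expectation (d : ℕ) (hd : 1 ≤ d)
    (s t : EuclideanSpace ℝ (Fin d)) (k l : Fin d) :
    ∫ x, (inner ℝ s x : ℝ) * (x k * x l) * CSplus t x ∂(stdGaussian d)
      = ((inner ℝ s t : ℝ) * ((if k = l then (1 : ℝ) else 0) - t k * t l)
          + s k * t l + t k * s l) * stdNormalCF t :=
  stdGaussian_matrix_inner_CSplus_expectation' d s t k l
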